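/- Let K be a field and p, p' ∈ K*. The classes of the matrices [[0, p], [1, 0]] and [[0, p'], [1, 0]] are conjugate in PGL(2, K) if and only if p/p' is a square in K*. -/

import Mathlib

open Matrix

-- scalar GL elements are central
lemma scalar_mem_center (K : Type*) [Field K] (X : GL (Fin 2) K) (a : K)
    (h : (X : Matrix (Fin 2) (Fin 2) K) = a • 1) :
    X ∈ Subgroup.center (GL (Fin 2) K) := by
  rw [Subgroup.mem_center_iff]
  intro g
  ext : 1
  show (g : Matrix (Fin 2) (Fin 2) K) * X = (X : Matrix (Fin 2) (Fin 2) K) * g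
  rw [h, Matrix.mul_smul, Matrix.smul_mul, mul_one, one_mul]

lemma center_is_scalar (K : Type*) [Field K] (X : GL (Fin 2) K)
    (h : X ∈ Subgroup.center (GL (Fin 2) K)) :
    ∃ a : K, (X : Matrix (Fin 2) (Fin 2) K) = a • 1 := by
  rw [Subgroup.mem_center_iff] at h
  set A : Matrix (Fin 2) (Fin 2) K := (X : Matrix (Fin 2) (Fin 2) K) with hA
  have hU1 : ∃ U1 : GL (Fin 2) K, (U1 : Matrix (Fin 2) (Fin 2) K) = !![1,1;0,1] :=
    ⟨⟨!![1,1;0,1], !![1,-1;0,1], by ext i j; fin_cases i <;> fin_cases j <;>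
      simp [Matrix.mul_apply, Fin.sum_univ_two], by ext i j; fin_cases i <;> fin_cases j <;>
      simp [Matrix.mul_apply, Fin.sum_univ_two]⟩, rfl⟩
  have hU2 : ∃ U2 : GL (Fin 2) K, (U2 : Matrix (Fin 2) (Fin 2) K) = !![1,0;1,1] :=
    ⟨⟨!![1,0;1,1], !![1,0;-1,1], by ext i j; fin_cases i <;> fin_cases j <;>
      simp [Matrix.mul_apply, Fin.sum_univ_two], by ext i j; fin_cases i <;> fin_cases j <;>
      simp [Matrix.mul_apply, Fin.sum_univ_two]⟩, rfl⟩
  obtain ⟨U1, hU1⟩ := hU1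
  obtain ⟨U2, hU2⟩ := hU2
  have e1 : (U1 : Matrix (Fin 2) (Fin 2) K) * A = A * U1 := by
    have := congrArg (Units.val) (h U1)
    simpa [Units.val_mul] using this
  have e2 : (U2 : Matrix (Fin 2) (Fin 2) K) * A = A * U2 := by
    have := congrArg (Units.val) (h U2)
    simpa [Units.val_mul] using this
  rw [hU1] at e1
  rw [hU2] at e2
  have c10 : A 1 0 = 0 := by
    have := congrFun (congrFun e1 0) 0
    simp [Matrix.mul_apply, Fin.sum_univ_two] at this
    linear_combination this
  have c01 : A 0 1 = 0 := by
    have := congrFun (congrFun e2 0) 0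
    simp [Matrix.mul_apply, Fin.sum_univ_two] at this
    linear_combination this
  have c11 : A 1 1 = A 0 0 := by
    have := congrFun (congrFun e1 0) 1
    simp [Matrix.mul_apply, Fin.sum_univ_two] at this
    linear_combination this
  refine ⟨A 0 0, ?_⟩
  ext i j
  fin_cases i <;> fin_cases j <;>
    simp [Matrix.smul_apply, Matrix.one_apply, c10, c01, c11]

theorem stmt_8 (K : Type*) [Field K] (p p' : K) (hp : p ≠ 0) (hp' : p' ≠ 0)
    (M M' : GL (Fin 2) K)
    (hM : (M : Matrix (Fin 2) (Fin 2) K) = !![0, p; 1, 0])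
    (hM' : (M' : Matrix (Fin 2) (Fin 2) K) = !![0, p'; 1, 0]) :
    IsConj (QuotientGroup.mk M : GL (Fin 2) K ⧸ Subgroup.center (GL (Fin 2) K))
        (QuotientGroup.mk M') ↔
      ∃ s : K, p / p' = s ^ 2 := by
  constructor
  · rintro hc
    rw [isConj_iff] at hc
    obtain ⟨c, hc⟩ := hc
    obtain ⟨N, rfl⟩ := QuotientGroup.mk_surjective c
    have hq : (QuotientGroup.mk (N * M * N⁻¹) : GL (Fin 2) K ⧸ Subgroup.center (GL (Fin 2) K))
        = QuotientGroup.mk M' := by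
      simpa [QuotientGroup.mk_mul, QuotientGroup.mk_inv] using hc
    have hmem : (N * M * N⁻¹)⁻¹ * M' ∈ Subgroup.center (GL (Fin 2) K) :=
      (QuotientGroup.eq ).mp hq
    obtain ⟨a, ha⟩ := center_is_scalar K _ hmem
    have hX : M' = (N * M * N⁻¹) * ((N * M * N⁻¹)⁻¹ * M') := by group
    -- determinants
    have hdet : (M' : Matrix (Fin 2) (Fin 2) K).det
        = ((N : Matrix (Fin 2) (Fin 2) K) * M * (N⁻¹ : GL (Fin 2) K) *
            (((N * M * N⁻¹)⁻¹ * M' : GL (Fin 2) K) : Matrix (Fin 2) (Fin 2) K)).det := by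
      conv_lhs => rw [hX]
      simp [Units.val_mul, Matrix.mul_assoc]
    rw [ha] at hdet
    have hdetN : (N : Matrix (Fin 2) (Fin 2) K).det * ((N⁻¹ : GL (Fin 2) K) : Matrix (Fin 2) (Fin 2) K).det = 1 := by
      rw [← Matrix.det_mul, ← Units.val_mul, mul_inv_cancel]
      simp
    have hdM : (M : Matrix (Fin 2) (Fin 2) K).det = -p := by
      rw [hM, Matrix.det_fin_two_of]; ring
    have hdM' : (M' : Matrix (Fin 2) (Fin 2) K).det = -p' := by
      rw [hM', Matrix.det_fin_two_of]; ring
    have hsmul : ((a • 1 : Matrix (Fin 2) (Fin 2) K)).det = a ^ 2 := by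
      simp [Matrix.det_smul]
    rw [Matrix.det_mul, Matrix.det_mul, Matrix.det_mul, hdM, hdM', hsmul] at hdet
    have key : -p' = -p * a ^ 2 := by
      linear_combination hdet - p * a ^ 2 * hdetN
    have ha0 : a ≠ 0 := by
      intro h0; rw [h0] at key; simp at key; exact hp' key
    refine ⟨a⁻¹, ?_⟩
    have : p' = p * a ^ 2 := by linear_combination -key
    rw [this]
    field_simp
  · rintro ⟨s, hs⟩
    have hs0 : s ≠ 0 := by
      intro h0; rw [h0] at hs; simp at hs
      exact hs.elim hp hp'
    set t : K := s⁻¹ with ht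
    have ht0 : t ≠ 0 := inv_ne_zero hs0
    have hpp : p = s ^ 2 * p' := by
      rw [div_eq_iff hp'] at hs; exact hs
    -- D = diag(t,1)
    set D : GL (Fin 2) K := ⟨!![t,0;0,1], !![t⁻¹,0;0,1], by
        ext i j; fin_cases i <;> fin_cases j <;>
        simp [Matrix.mul_apply, Fin.sum_univ_two, mul_inv_cancel₀ ht0], by
        ext i j; fin_cases i <;> fin_cases j <;>
        simp [Matrix.mul_apply, Fin.sum_univ_two, inv_mul_cancel₀ ht0]⟩ with hD
    set Z : GL (Fin 2) K := ⟨t • 1, t⁻¹ • 1, by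
        rw [smul_mul_smul_comm, mul_inv_cancel₀ ht0, one_mul, one_smul], by
        rw [smul_mul_smul_comm, inv_mul_cancel₀ ht0, one_mul, one_smul]⟩ with hZ
    have hZc : Z ∈ Subgroup.center (GL (Fin 2) K) := scalar_mem_center K Z t rfl
    have key : D * M * Z = M' * D := by
      ext : 1
      show ((D : Matrix (Fin 2) (Fin 2) K) * M) * Z = (M' : Matrix (Fin 2) (Fin 2) K) * D
      rw [hM, hM']
      show (!![t,0;0,1] * !![0,p;1,0]) * (t • 1) = !![0,p';1,0] * !![t,0;0,1]
      ext i j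
      fin_cases i <;> fin_cases j <;>
        simp [Matrix.mul_apply, Fin.sum_univ_two, hpp, ht] <;>
        field_simp <;> ring
    have : (QuotientGroup.mk D : GL (Fin 2) K ⧸ Subgroup.center (GL (Fin 2) K)) *
        QuotientGroup.mk M * (QuotientGroup.mk D)⁻¹ = QuotientGroup.mk M' := by
      have hz1 : (QuotientGroup.mk Z : GL (Fin 2) K ⧸ Subgroup.center (GL (Fin 2) K)) = 1 :=
        (QuotientGroup.eq_one_iff Z).mpr hZc
      have := congrArg (QuotientGroup.mk (s := Subgroup.center (GL (Fin 2) K))) key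
      simp only [QuotientGroup.mk_mul, hz1, mul_one] at this
      rw [this]
      group
    rw [isConj_iff]
    exact ⟨_, this⟩
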